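/- Assume φ₁(𝒞,𝒯) and |𝒞| < 𝔞_{ω₁}. Then for every uncountable A ⊆ ω₁ there exists an uncountable B ⊆ A such that for every X ∈ 𝒯, either B ⊊ X or |B ∩ X| ≤ ω. -/

import Mathlib

noncomputable def omega1 : Ordinal.{0} := (Cardinal.aleph 1).ord

/-- An element of the damage control collection `𝒞`: a pair `(a, 𝒜)` where `a` is a finite
root and `𝒜 ⊆ [ω₁]^N` is a family, represented by functions `ℕ → Ordinal` normalized to `0`
beyond the first `N` coordinates. -/
structure DCE : Type 1 where
  root : Finset Ordinal.{0}
  N : ℕ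
  fam : Set (ℕ → Ordinal.{0})

namespace DCE

/-- The `i`-th column `𝒜_i = {c(i) : c ∈ 𝒜}`. -/
def col (E : DCE) (i : ℕ) : Set Ordinal.{0} := (fun c => c i) '' E.fam

/-- `⋃𝒜`, the set of all entries of members of the family. -/
def unionSet (E : DCE) : Set Ordinal.{0} := {x | ∃ c ∈ E.fam, ∃ i, i < E.N ∧ c i = x}

/-- Validity (condition (C1)): `𝒜 ⊆ [ω₁]^N` is an uncountable non-overlapping family of
increasing `N`-tuples, normalized, and the root lies below all of `⋃𝒜`. -/
def Valid (E : DCE) : Prop :=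
  1 ≤ E.N ∧ ¬E.fam.Countable ∧
  (∀ c ∈ E.fam, ∀ i j : ℕ, i < j → j < E.N → c i < c j) ∧
  (∀ c ∈ E.fam, ∀ i : ℕ, E.N ≤ i → c i = 0) ∧
  (∀ c ∈ E.fam, ∀ i : ℕ, i < E.N → c i < omega1) ∧
  (∀ c ∈ E.fam, ∀ d ∈ E.fam, c ≠ d →
    (∀ i, i < E.N → ∀ j, j < E.N → c i < d j) ∨
    (∀ i, i < E.N → ∀ j, j < E.N → d i < c j)) ∧
  (∀ x ∈ E.root, x < omega1) ∧
  (∀ x ∈ E.root, ∀ c ∈ E.fam, ∀ i, i < E.N → x < c i)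

/-- `c[I]`, the restriction of `c : ℕ → Ordinal` along the index map `I`, normalized. -/
def reindex (NA : ℕ) (I : ℕ → ℕ) (c : ℕ → Ordinal.{0}) : ℕ → Ordinal.{0} :=
  fun j => if j < NA then c (I j) else 0

/-- The copy structure of `𝒜 ⪯ ℬ`: a (nonempty) finite set `𝕀` of strictly increasing index
maps `[N_𝒜] → [N_ℬ]` with `c[I] ∈ 𝒜` for every `c ∈ ℬ`, `I ∈ 𝕀`, and with all coordinates of
members of `ℬ` outside `⋃_{I ∈ 𝕀} ran I` avoiding `⋃𝒜`. -/
def Copies (E F : DCE) (𝕀 : Finset (ℕ → ℕ)) : Prop :=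
  𝕀.Nonempty ∧
  (∀ I ∈ 𝕀, (∀ i j : ℕ, i < j → j < E.N → I i < I j) ∧ ∀ i, i < E.N → I i < F.N) ∧
  (∀ c ∈ F.fam, ∀ I ∈ 𝕀, reindex E.N I c ∈ E.fam) ∧
  (∀ c ∈ F.fam, ∀ j, j < F.N → (∀ I ∈ 𝕀, ∀ i, i < E.N → I i ≠ j) → c j ∉ E.unionSet)

/-- The exact copy structure required in (C2): moreover `[c]^{N_𝒜} ∩ 𝒜 = {c[I] : I ∈ 𝕀}`. -/
def Exact (E F : DCE) (𝕀 : Finset (ℕ → ℕ)) : Prop :=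
  Copies E F 𝕀 ∧
  ∀ c ∈ F.fam, ∀ d ∈ E.fam, (∀ i, i < E.N → ∃ j, j < F.N ∧ d i = c j) →
    ∃ I ∈ 𝕀, d = reindex E.N I c

/-- `(a,𝒜) ⪯ (b,ℬ)`. -/
def le (E F : DCE) : Prop := E.root ⊆ F.root ∧ ∃ 𝕀 : Finset (ℕ → ℕ), Copies E F 𝕀

/-- `(a,𝒜) ≺ (b,ℬ)`. -/
def lt (E F : DCE) : Prop := le E F ∧ E ≠ F

/-- The trivial element `(∅, [ω₁]¹)`. -/
def trivialDCE : DCE where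
  root := ∅
  N := 1
  fam := {c | ∃ α : Ordinal.{0}, α < omega1 ∧ c = fun j => if j = 0 then α else 0}

/-- The tree `𝒯` of all columns of members of `𝒞`. -/
def Tset (𝒞 : Set DCE) : Set (Set Ordinal.{0}) :=
  {X | ∃ E ∈ 𝒞, ∃ i, i < E.N ∧ X = E.col i}

/-- The damage control axioms `φ₁(𝒞,𝒯,𝐄)` (with `𝒯` and `𝐄` induced from `𝒞`):
(C1) the trivial element belongs to `𝒞` and every member is valid; (C2) column containment
implies the exact copy structure; (T1) every node of `𝒯` has only finitely many strict
supersets in `𝒯`; (T3) `⊆`-incomparable members of `𝒯` have countable intersection;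
(T4) for `Y ⊊ X` in `𝒯`, the increasing enumerations satisfy `X(α) < Y(α)` for all `α < ω₁`. -/
def phi1 (𝒞 : Set DCE) : Prop :=
  trivialDCE ∈ 𝒞 ∧
  (∀ E ∈ 𝒞, E.Valid) ∧
  (∀ E ∈ 𝒞, ∀ F ∈ 𝒞, (∃ i, i < F.N ∧ ∃ j, j < E.N ∧ F.col i ⊆ E.col j) →
    E.root ⊆ F.root ∧ ∃ 𝕀 : Finset (ℕ → ℕ), Exact E F 𝕀) ∧
  (∀ X ∈ Tset 𝒞, {Y ∈ Tset 𝒞 | X ⊂ Y}.Finite) ∧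
  (∀ X ∈ Tset 𝒞, ∀ Y ∈ Tset 𝒞, ¬X ⊆ Y → ¬Y ⊆ X → (X ∩ Y).Countable) ∧
  (∀ X ∈ Tset 𝒞, ∀ Y ∈ Tset 𝒞, Y ⊆ X → Y ≠ X → ∀ α, α < omega1 →
    Ordinal.enumOrd X α < Ordinal.enumOrd Y α)

end DCE

/-- The generalized almost disjointness number `𝔞_{ω₁}`: the least cardinality of an
uncountable maximal almost disjoint family of uncountable subsets of `ω₁`
(almost disjointness mod countable). -/
noncomputable def aOmega1 : Cardinal.{1} :=
  sInf {c : Cardinal.{1} | ∃ 𝒜 : Set (Set Ordinal.{0}),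
    ¬𝒜.Countable ∧
    (∀ X ∈ 𝒜, X ⊆ Set.Iio omega1 ∧ ¬X.Countable) ∧
    (∀ X ∈ 𝒜, ∀ Y ∈ 𝒜, X ≠ Y → (X ∩ Y).Countable) ∧
    (∀ Z : Set Ordinal.{0}, Z ⊆ Set.Iio omega1 → ¬Z.Countable →
      ∃ Y ∈ 𝒜, ¬(Z ∩ Y).Countable) ∧
    Cardinal.mk ↥𝒜 = c}



namespace L30

open Ordinal Cardinal Set

lemma countable_Iio {x : Ordinal.{0}} (hx : x < omega1) : (Set.Iio x).Countable := by
  rw [Cardinal.countable_iff_lt_aleph_one, Ordinal.mk_Iio_ordinal]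
  exact Cardinal.lift_lt_aleph_one.mpr (Cardinal.lt_ord.mp hx)

lemma countable_Iic {x : Ordinal.{0}} (hx : x < omega1) : (Set.Iic x).Countable := by
  rw [← Set.Iio_insert]
  exact (countable_Iio hx).insert x

lemma not_countable_Iio_omega1 : ¬ (Set.Iio omega1).Countable := by
  rw [Cardinal.countable_iff_lt_aleph_one, Ordinal.mk_Iio_ordinal]
  simp only [omega1, Cardinal.card_ord]
  rw [Cardinal.lift_lt_aleph_one]
  exact lt_irrefl _

lemma enum_basic {X : Set Ordinal.{0}} (hX : ¬X.Countable) (hXs : X ⊆ Set.Iio omega1) :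
    ∀ α, α < omega1 →
      (Ordinal.enumOrd X α ∈ X ∧ ∀ β, β < α → Ordinal.enumOrd X β < Ordinal.enumOrd X α) := by
  intro α
  induction α using Ordinal.induction with
  | h α IH =>
    intro hα
    have hne : (X ∩ { b | ∀ c, c < α → Ordinal.enumOrd X c < b }).Nonempty := by
      by_contra hP
      rw [Set.not_nonempty_iff_eq_empty] at hP
      have hsub : X ⊆ ⋃ c ∈ Set.Iio α, Set.Iic (Ordinal.enumOrd X c) := by
        intro x hx
        by_contra hx'
        simp only [Set.mem_iUnion, Set.mem_Iic, not_exists, not_le, Set.mem_Iio] at hx'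
        have : x ∈ X ∩ { b | ∀ c, c < α → Ordinal.enumOrd X c < b } :=
          ⟨hx, fun c hc => hx' c hc⟩
        rw [hP] at this; exact this
      apply hX
      refine Set.Countable.mono hsub ?_
      refine Set.Countable.biUnion (countable_Iio hα) ?_
      intro c hc
      exact countable_Iic (hXs ((IH c hc (hc.trans hα)).1))
    have hmem := csInf_mem hne
    rw [Ordinal.enumOrd]
    exact ⟨hmem.1, fun β hβ => hmem.2 β hβ⟩

lemma enum_surj {X : Set Ordinal.{0}} (hX : ¬X.Countable) (hXs : X ⊆ Set.Iio omega1)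
    {x : Ordinal.{0}} (hx : x ∈ X) : ∃ α, α < omega1 ∧ Ordinal.enumOrd X α = x := by
  set T : Set Ordinal.{0} := {α | α < omega1 ∧ x ≤ Ordinal.enumOrd X α} with hT
  rcases Set.eq_empty_or_nonempty T with hTe | hTne
  · exfalso
    have hlt : ∀ α : Ordinal.{0}, α < omega1 → Ordinal.enumOrd X α < x := by
      intro α hα
      by_contra hle
      have : α ∈ T := ⟨hα, not_lt.mp hle⟩
      rw [hTe] at this; exact this
    -- injective map from Iio omega1 into Iio x
    have hinj : Function.Injective
        (fun p : (Set.Iio omega1 : Set Ordinal.{0}) =>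
          (⟨Ordinal.enumOrd X p.1, hlt p.1 p.2⟩ : (Set.Iio x : Set Ordinal.{0}))) := by
      rintro ⟨a, ha⟩ ⟨b, hb⟩ hab
      simp only [Subtype.mk.injEq] at hab ⊢
      rcases lt_trichotomy a b with hlt' | he | hgt
      · exact absurd hab (ne_of_lt ((enum_basic hX hXs b hb).2 a hlt'))
      · exact he
      · exact absurd hab.symm (ne_of_lt ((enum_basic hX hXs a ha).2 b hgt))
    have hcard := Cardinal.mk_le_of_injective hinj
    rw [Ordinal.mk_Iio_ordinal, Ordinal.mk_Iio_ordinal] at hcard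
    rw [Cardinal.lift_le] at hcard
    have h1 : Ordinal.card omega1 = Cardinal.aleph 1 := Cardinal.card_ord _
    rw [h1] at hcard
    have h2 : Ordinal.card x ≤ ℵ₀ := by
      have hlt1 : Ordinal.card x < Cardinal.aleph 1 := Cardinal.lt_ord.mp (hXs hx)
      rw [← Cardinal.succ_aleph0, Order.lt_succ_iff] at hlt1
      exact hlt1
    exact absurd (hcard.trans h2) (not_le.mpr Cardinal.aleph0_lt_aleph_one)
  · set β := sInf T with hβ
    have hmem : β ∈ T := csInf_mem hTne
    refine ⟨β, hmem.1, ?_⟩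
    refine le_antisymm ?_ hmem.2
    apply Ordinal.enumOrd_le_of_forall_lt hx
    intro c hc
    by_contra hle
    have : c ∈ T := ⟨hc.trans hmem.1, not_lt.mp hle⟩
    exact absurd (csInf_le (OrderBot.bddBelow T) this) (not_le.mpr hc)

lemma no_descending (f : ℕ → Ordinal.{0}) (hf : ∀ n, f (n + 1) < f n) : False := by
  have hne : (Set.range f).Nonempty := ⟨f 0, Set.mem_range_self 0⟩
  obtain ⟨n, hn⟩ := csInf_mem hne
  have h1 : sInf (Set.range f) ≤ f (n + 1) := csInf_le (OrderBot.bddBelow _) ⟨n + 1, rfl⟩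
  have h2 := hf n
  rw [hn] at h2
  exact absurd h1 (not_le.mpr h2)



open Ordinal Cardinal Set

section
variable {𝒞 : Set DCE} (h : DCE.phi1 𝒞)
include h

lemma sub_W {X : Set Ordinal.{0}} (hX : X ∈ DCE.Tset 𝒞) : X ⊆ Set.Iio omega1 := by
  obtain ⟨E, hE, i, hi, rfl⟩ := hX
  rintro x ⟨c, hc, rfl⟩
  exact (h.2.1 E hE).2.2.2.2.1 c hc i hi

lemma W_mem : Set.Iio omega1 ∈ DCE.Tset 𝒞 := by
  refine ⟨DCE.trivialDCE, h.1, 0, Nat.zero_lt_one, ?_⟩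
  ext x
  constructor
  · rintro hx
    exact ⟨fun j => if j = 0 then x else 0, ⟨x, hx, rfl⟩, by simp [DCE.col]⟩
  · rintro ⟨c, ⟨β, hβ, rfl⟩, rfl⟩
    simpa using hβ

lemma comp {X Y : Set Ordinal.{0}} (hX : X ∈ DCE.Tset 𝒞) (hY : Y ∈ DCE.Tset 𝒞)
    (hc : ¬(X ∩ Y).Countable) : X ⊆ Y ∨ Y ⊆ X := by
  by_contra hcon
  push_neg at hcon
  exact hc (h.2.2.2.2.1 X hX Y hY hcon.1 hcon.2)

lemma chainEmpty (f : ℕ → Set Ordinal.{0}) (hmem : ∀ n, f n ∈ DCE.Tset 𝒞)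
    (hunc : ∀ n, ¬(f n).Countable) (hsub : ∀ n, f (n + 1) ⊆ f n)
    (hne : ∀ n, f (n + 1) ≠ f n) (x : Ordinal.{0}) (hx : ∀ n, x ∈ f n) : False := by
  have hXs : ∀ n, f n ⊆ Set.Iio omega1 := fun n => sub_W h (hmem n)
  have hex : ∀ n, ∃ α, α < omega1 ∧ Ordinal.enumOrd (f n) α = x :=
    fun n => enum_surj (hunc n) (hXs n) (hx n)
  choose α hα henum using hex
  have hdec : ∀ n, α (n + 1) < α n := by
    intro n
    by_contra hge
    push_neg at hge
    have hT4 := h.2.2.2.2.2 (f n) (hmem n) (f (n + 1)) (hmem (n + 1)) (hsub n) (hne n)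
    have h1 : Ordinal.enumOrd (f n) (α (n + 1)) < Ordinal.enumOrd (f (n + 1)) (α (n + 1)) :=
      hT4 (α (n + 1)) (hα (n + 1))
    rw [henum (n + 1)] at h1
    have h2 : Ordinal.enumOrd (f n) (α n) ≤ Ordinal.enumOrd (f n) (α (n + 1)) := by
      rcases eq_or_lt_of_le hge with he | hlt
      · rw [he]
      · exact le_of_lt ((enum_basic (hunc n) (hXs n) (α (n + 1)) (hα (n + 1))).2 (α n) hlt)
    rw [henum n] at h2
    exact absurd (lt_of_le_of_lt h2 h1) (lt_irrefl x)
  exact no_descending α hdec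

end

def Tp (𝒞 : Set DCE) (A : Set Ordinal.{0}) : Set (Set Ordinal.{0}) :=
  {X | X ∈ DCE.Tset 𝒞 ∧ ¬(A ∩ X).Countable}

def up (𝒞 : Set DCE) (A : Set Ordinal.{0}) (D : Set Ordinal.{0}) : Set (Set Ordinal.{0}) :=
  {E | E ∈ Tp 𝒞 A ∧ D ⊂ E}

noncomputable def lev (𝒞 : Set DCE) (A : Set Ordinal.{0}) (D : Set Ordinal.{0}) : ℕ :=
  (up 𝒞 A D).ncard

section
variable {𝒞 : Set DCE} (h : DCE.phi1 𝒞) {A : Set Ordinal.{0}}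

lemma Tp_not_countable {D : Set Ordinal.{0}} (hD : D ∈ Tp 𝒞 A) : ¬D.Countable :=
  fun hc => hD.2 (Set.Countable.mono Set.inter_subset_right hc)

include h

lemma up_finite {D : Set Ordinal.{0}} (hD : D ∈ Tp 𝒞 A) : (up 𝒞 A D).Finite :=
  (h.2.2.2.1 D hD.1).subset (fun E hE => ⟨hE.1.1, hE.2⟩)

lemma up_chain {D : Set Ordinal.{0}} (hD : D ∈ Tp 𝒞 A) :
    ∀ E ∈ up 𝒞 A D, ∀ F ∈ up 𝒞 A D, E ⊆ F ∨ F ⊆ E := by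
  intro E hE F hF
  apply comp h hE.1.1 hF.1.1
  intro hc
  exact Tp_not_countable hD (hc.mono (Set.subset_inter hE.2.1 hF.2.1))

lemma lev_succ_le {D D' : Set Ordinal.{0}} (hD : D ∈ Tp 𝒞 A) (hD' : D' ∈ Tp 𝒞 A)
    (hss : D ⊂ D') : lev 𝒞 A D' + 1 ≤ lev 𝒞 A D := by
  have hsub : insert D' (up 𝒞 A D') ⊆ up 𝒞 A D := by
    rintro G (rfl | hG)
    · exact ⟨hD', hss⟩
    · exact ⟨hG.1, hss.trans hG.2⟩
  have h1 : (insert D' (up 𝒞 A D')).ncard = lev 𝒞 A D' + 1 :=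
    Set.ncard_insert_of_notMem (fun hc => hc.2.2 subset_rfl) (up_finite h hD')
  calc lev 𝒞 A D' + 1 = (insert D' (up 𝒞 A D')).ncard := h1.symm
    _ ≤ lev 𝒞 A D := Set.ncard_le_ncard hsub (up_finite h hD)

lemma same_lev_ad {D D' : Set Ordinal.{0}} (hD : D ∈ Tp 𝒞 A) (hD' : D' ∈ Tp 𝒞 A)
    (hne : D ≠ D') (hlev : lev 𝒞 A D = lev 𝒞 A D') : (D ∩ D').Countable := by
  by_contra hc
  rcases comp h hD.1 hD'.1 hc with hs | hs
  · have := lev_succ_le h hD hD' (ssubset_of_subset_of_ne hs hne)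
    omega
  · have := lev_succ_le h hD' hD (ssubset_of_subset_of_ne hs (Ne.symm hne))
    omega

lemma exists_level :
    ∀ (n : ℕ) (D : Set Ordinal.{0}), D ∈ Tp 𝒞 A → lev 𝒞 A D = n →
      ∀ j, j ≤ n → ∃ G, G ∈ Tp 𝒞 A ∧ D ⊆ G ∧ lev 𝒞 A G = j := by
  intro n
  induction n using Nat.strong_induction_on with
  | _ n IH =>
    intro D hD hlev j hj
    rcases eq_or_lt_of_le hj with he | hlt
    · exact ⟨D, hD, subset_rfl, by rw [hlev, ← he]⟩
    · have hne : (up 𝒞 A D).Nonempty := by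
        apply Set.nonempty_of_ncard_ne_zero
        show lev 𝒞 A D ≠ 0
        omega
      obtain ⟨F, hF, hFmin⟩ :=
        Set.Finite.exists_minimalFor id (up 𝒞 A D) (up_finite h hD) hne
      have hleast : ∀ G ∈ up 𝒞 A D, F ⊆ G := by
        intro G hG
        rcases up_chain h hD F hF G hG with hs | hs
        · exact hs
        · exact hFmin hG hs
      have hup_eq : up 𝒞 A D = insert F (up 𝒞 A F) := by
        ext G
        constructor
        · intro hG
          rcases eq_or_ne G F with rfl | hne'
          · exact Set.mem_insert _ _
          · exact Set.mem_insert_of_mem _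
              ⟨hG.1, ssubset_of_subset_of_ne (hleast G hG) (Ne.symm hne')⟩
        · rintro (rfl | hG)
          · exact hF
          · exact ⟨hG.1, hF.2.trans hG.2⟩
      have hlevF : lev 𝒞 A D = lev 𝒞 A F + 1 := by
        rw [lev, hup_eq]
        exact Set.ncard_insert_of_notMem (fun hc => hc.2.2 subset_rfl) (up_finite h hF.1)
      obtain ⟨G, hG, hFG, hlevG⟩ :=
        IH (lev 𝒞 A F) (by omega) F hF.1 rfl j (by omega)
      exact ⟨G, hG, (subset_of_ssubset hF.2).trans hFG, hlevG⟩

end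

section
variable {𝒞 : Set DCE} (h : DCE.phi1 𝒞) {A : Set Ordinal.{0}}
include h

lemma key_of_countable (hA : A ⊆ Set.Iio omega1) (hAunc : ¬A.Countable)
    (hTc : (Tp 𝒞 A).Countable) :
    ∃ C, C ∈ DCE.Tset 𝒞 ∧ ¬(A ∩ C).Countable ∧ ∃ B, B ⊆ A ∩ C ∧ ¬B.Countable ∧
      ∀ D, D ∈ DCE.Tset 𝒞 → D ⊆ C → D ≠ C → (B ∩ D).Countable := by
  classical
  set J : Set Ordinal.{0} :=
    ⋃ X ∈ Tp 𝒞 A, ⋃ Y ∈ Tp 𝒞 A, {z | z ∈ X ∩ Y ∧ ¬X ⊆ Y ∧ ¬Y ⊆ X} with hJ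
  have hJc : J.Countable := by
    refine Set.Countable.biUnion hTc fun X hX => Set.Countable.biUnion hTc fun Y hY => ?_
    by_cases hinc : ¬X ⊆ Y ∧ ¬Y ⊆ X
    · refine Set.Countable.mono ?_ (h.2.2.2.2.1 X hX.1 Y hY.1 hinc.1 hinc.2)
      intro z hz
      exact hz.1
    · have : {z | z ∈ X ∩ Y ∧ ¬X ⊆ Y ∧ ¬Y ⊆ X} = ∅ := by
        ext z; simp only [Set.mem_setOf_eq, Set.mem_empty_iff_false, iff_false]
        intro hz; exact hinc hz.2
      rw [this]; exact Set.countable_empty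
  have hA'unc : ¬(A \ J).Countable := by
    intro hc
    apply hAunc
    have : A ⊆ (A \ J) ∪ J := by
      intro x hx
      by_cases hxJ : x ∈ J
      · exact Or.inr hxJ
      · exact Or.inl ⟨hx, hxJ⟩
    exact (hc.union hJc).mono this
  have hWTp : Set.Iio omega1 ∈ Tp 𝒞 A := by
    refine ⟨W_mem h, ?_⟩
    rwa [Set.inter_eq_self_of_subset_left hA]
  -- every point of A \ J has a minimal element of Tp containing it
  have claim : ∀ x : Ordinal.{0}, ∃ C, x ∈ A \ J →
      C ∈ Tp 𝒞 A ∧ x ∈ C ∧ ∀ D, D ∈ Tp 𝒞 A → D ⊆ C → D ≠ C → x ∉ D := by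
    intro x
    by_cases hx : x ∈ A \ J
    swap
    · exact ⟨∅, fun hc => absurd hc hx⟩
    set Sx : Set (Set Ordinal.{0}) := {D | D ∈ Tp 𝒞 A ∧ x ∈ D} with hSx
    have hWSx : Set.Iio omega1 ∈ Sx := ⟨hWTp, hA hx.1⟩
    have hchain : ∀ D ∈ Sx, ∀ E ∈ Sx, D ⊆ E ∨ E ⊆ D := by
      intro D hD E hE
      by_contra hcon
      push_neg at hcon
      apply hx.2
      refine Set.mem_biUnion hD.1 (Set.mem_biUnion hE.1 ?_)
      exact ⟨⟨hD.2, hE.2⟩, hcon.1, hcon.2⟩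
    have hSfin : Sx.Finite := by
      by_contra hinf
      have step : ∀ D ∈ Sx, ∃ D', D' ∈ Sx ∧ D' ⊆ D ∧ D' ≠ D := by
        intro D hD
        have hbadfin : ({D} ∪ {E ∈ DCE.Tset 𝒞 | D ⊂ E}).Finite :=
          (Set.finite_singleton D).union (h.2.2.2.1 D hD.1.1)
        obtain ⟨E, hE⟩ := (Set.Infinite.diff hinf hbadfin).nonempty
        have hESx : E ∈ Sx := hE.1
        have hEne : E ≠ D := fun hc => hE.2 (Or.inl (by rw [hc]; rfl))
        rcases hchain E hESx D hD with hs | hs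
        · exact ⟨E, hESx, hs, hEne⟩
        · exfalso
          exact hE.2 (Or.inr ⟨hESx.1.1, ssubset_of_subset_of_ne hs (Ne.symm hEne)⟩)
      choose f hf1 hf2 hf3 using step
      let g : ℕ → {D : Set Ordinal.{0} // D ∈ Sx} := fun n =>
        Nat.rec ⟨Set.Iio omega1, hWSx⟩ (fun _ p => ⟨f p.1 p.2, hf1 p.1 p.2⟩) n
      have hg : ∀ n, g (n + 1) = ⟨f (g n).1 (g n).2, hf1 _ _⟩ := fun n => rfl
      have hgsub : ∀ n, (g (n + 1)).1 ⊆ (g n).1 := by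
        intro n; rw [hg n]; exact hf2 _ _
      have hgne : ∀ n, (g (n + 1)).1 ≠ (g n).1 := by
        intro n; rw [hg n]; exact hf3 _ _
      exact chainEmpty h (fun n => (g n).1)
        (fun n => (g n).2.1.1) (fun n => Tp_not_countable (g n).2.1)
        hgsub hgne x (fun n => (g n).2.2)
    obtain ⟨C, hCSx, hCmin⟩ :=
      Set.Finite.exists_minimalFor id Sx hSfin ⟨Set.Iio omega1, hWSx⟩
    refine ⟨C, fun _ => ⟨hCSx.1, hCSx.2, ?_⟩⟩
    intro D hD hDC hDne hxD
    exact hDne (Set.Subset.antisymm hDC (hCmin ⟨hD, hxD⟩ hDC))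
  choose F hF using claim
  have hcover : (A \ J) ⊆ ⋃ C ∈ Tp 𝒞 A, {x | x ∈ A \ J ∧ F x = C} := by
    intro x hx
    exact Set.mem_biUnion (hF x hx).1 ⟨hx, rfl⟩
  obtain ⟨C₀, hC₀, hBunc⟩ :
      ∃ C₀, C₀ ∈ Tp 𝒞 A ∧ ¬{x | x ∈ A \ J ∧ F x = C₀}.Countable := by
    by_contra hall
    push_neg at hall
    exact hA'unc ((Set.Countable.biUnion hTc fun C hC => hall C hC).mono hcover)
  refine ⟨C₀, hC₀.1, hC₀.2, {x | x ∈ A \ J ∧ F x = C₀}, ?_, hBunc, ?_⟩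
  · intro x hx
    refine ⟨hx.1.1, ?_⟩
    have := (hF x hx.1).2.1
    rwa [hx.2] at this
  · intro D hD hDC hDne
    by_cases hAD : (A ∩ D).Countable
    · refine Set.Countable.mono ?_ hAD
      rintro z ⟨⟨hz1, _⟩, hzD⟩
      exact ⟨hz1.1, hzD⟩
    · have : {x | x ∈ A \ J ∧ F x = C₀} ∩ D = ∅ := by
        ext x
        simp only [Set.mem_inter_iff, Set.mem_setOf_eq, Set.mem_empty_iff_false, iff_false]
        rintro ⟨⟨hx1, hx2⟩, hxD⟩
        have h5 := (hF x hx1).2.2 D ⟨hD, hAD⟩ (by rw [hx2]; exact hDC) (by rw [hx2]; exact hDne)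
        exact h5 hxD
      rw [this]; exact Set.countable_empty

end

lemma card_arith {a b : Cardinal.{1}} (hab : a < b) (hb : ℵ₀ < b) : a * ℵ₀ + 1 < b := by
  rcases le_total a ℵ₀ with ha | ha
  · have h1 : a * ℵ₀ ≤ ℵ₀ * ℵ₀ := mul_le_mul_left ha _
    rw [Cardinal.aleph0_mul_aleph0] at h1
    have h2 : a * ℵ₀ + 1 ≤ ℵ₀ + 1 := add_le_add_left h1 1
    rw [Cardinal.add_one_eq le_rfl] at h2
    exact h2.trans_lt hb
  · rw [Cardinal.mul_aleph0_eq ha, Cardinal.add_one_eq ha]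
    exact hab

section
variable {𝒞 : Set DCE} (h : DCE.phi1 𝒞) {A : Set Ordinal.{0}}

lemma mk_Tset_le : Cardinal.mk ↥(DCE.Tset 𝒞) ≤ Cardinal.mk ↥𝒞 * Cardinal.aleph0 := by
  classical
  have hch : ∀ X : ↥(DCE.Tset 𝒞), ∃ p : ↥𝒞 × ULift.{1} ℕ,
      (X : Set Ordinal.{0}) = (p.1 : DCE).col p.2.down := by
    rintro ⟨X, E, hE, i, hi, rfl⟩
    exact ⟨⟨⟨E, hE⟩, ⟨i⟩⟩, rfl⟩
  choose f hf using hch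
  have hinj : Function.Injective f := by
    intro X Y hXY
    apply Subtype.ext
    rw [hf X, hf Y, hXY]
  have h1 := Cardinal.mk_le_of_injective hinj
  rw [Cardinal.mk_prod, Cardinal.mk_uLift, Cardinal.mk_nat] at h1
  simpa using h1

include h

lemma key (hsize : Cardinal.mk ↥𝒞 < aOmega1)
    (hA : A ⊆ Set.Iio omega1) (hAunc : ¬A.Countable) :
    ∃ C, C ∈ DCE.Tset 𝒞 ∧ ¬(A ∩ C).Countable ∧ ∃ B, B ⊆ A ∩ C ∧ ¬B.Countable ∧
      ∀ D, D ∈ DCE.Tset 𝒞 → D ⊆ C → D ≠ C → (B ∩ D).Countable := by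
  classical
  by_cases hTc : (Tp 𝒞 A).Countable
  · exact key_of_countable h hA hAunc hTc
  by_contra hMC
  push_neg at hMC
  -- ¬(main claim): every uncountable trace goes strictly down
  have star : ∀ V : Set Ordinal.{0}, V ⊆ A → ∀ C, C ∈ DCE.Tset 𝒞 → ¬(V ∩ C).Countable →
      ∃ D, D ∈ DCE.Tset 𝒞 ∧ D ⊆ C ∧ D ≠ C ∧ ¬(V ∩ D).Countable := by
    intro V hVA C hC hVC
    have hsubAC : V ∩ C ⊆ A ∩ C := Set.inter_subset_inter_left C hVA
    have hAC : ¬(A ∩ C).Countable := fun hc => hVC (Set.Countable.mono hsubAC hc)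
    have hVCunc : ¬(V ∩ C).Countable := hVC
    obtain ⟨D, hD1, hD2, hD3, hD4⟩ := hMC C hC hAC (V ∩ C) hsubAC hVCunc
    refine ⟨D, hD1, hD2, hD3, fun hc => hD4 (Set.Countable.mono ?_ hc)⟩
    intro z hz
    exact ⟨hz.1.1, hz.2⟩
  -- arbitrary high levels with uncountable V-trace
  have chain : ∀ V : Set Ordinal.{0}, V ⊆ A → ¬V.Countable →
      ∀ n : ℕ, ∃ E, E ∈ Tp 𝒞 A ∧ ¬(V ∩ E).Countable ∧ n ≤ lev 𝒞 A E := by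
    intro V hVA hVunc n
    have hW0 : ¬(V ∩ Set.Iio omega1).Countable := by
      rwa [Set.inter_eq_self_of_subset_left (hVA.trans hA)]
    have stepex : ∀ p : {D : Set Ordinal.{0} // D ∈ DCE.Tset 𝒞 ∧ ¬(V ∩ D).Countable},
        ∃ q : {D : Set Ordinal.{0} // D ∈ DCE.Tset 𝒞 ∧ ¬(V ∩ D).Countable},
          q.1 ⊆ p.1 ∧ q.1 ≠ p.1 := by
      rintro ⟨C, hC1, hC2⟩
      obtain ⟨D, hD1, hD2, hD3, hD4⟩ := star V hVA C hC1 hC2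
      exact ⟨⟨D, hD1, hD4⟩, hD2, hD3⟩
    choose st hst1 hst2 using stepex
    let g : ℕ → {D : Set Ordinal.{0} // D ∈ DCE.Tset 𝒞 ∧ ¬(V ∩ D).Countable} := fun k =>
      Nat.rec ⟨Set.Iio omega1, W_mem h, hW0⟩ (fun _ p => st p) k
    have hg : ∀ k, g (k + 1) = st (g k) := fun k => rfl
    have hgsub : ∀ k, (g (k + 1)).1 ⊆ (g k).1 := by intro k; rw [hg k]; exact hst1 _
    have hgne : ∀ k, (g (k + 1)).1 ≠ (g k).1 := by intro k; rw [hg k]; exact hst2 _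
    have hgmono : ∀ i j, i ≤ j → (g j).1 ⊆ (g i).1 := by
      intro i j hij
      induction j with
      | zero => rw [Nat.le_zero.mp hij]
      | succ j IHj =>
        rcases Nat.lt_or_ge i (j + 1) with hlt | hge
        · exact (hgsub j).trans (IHj (Nat.lt_succ_iff.mp hlt))
        · rw [Nat.le_antisymm hij hge]
    have hgssub : ∀ i j, i < j → (g j).1 ⊂ (g i).1 := by
      intro i j hij
      refine ssubset_of_subset_of_ne (hgmono i j (le_of_lt hij)) ?_
      intro he
      have h1 : (g (i + 1)).1 ⊆ (g i).1 := hgsub i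
      have h2 : (g i).1 ⊆ (g (i + 1)).1 := by
        rw [← he]; exact hgmono (i + 1) j hij
      exact hgne i (Set.Subset.antisymm h1 h2)
    have hgTp : ∀ k, (g k).1 ∈ Tp 𝒞 A := by
      intro k
      refine ⟨(g k).2.1, fun hc => (g k).2.2 (Set.Countable.mono ?_ hc)⟩
      exact Set.inter_subset_inter_left _ hVA
    refine ⟨(g n).1, hgTp n, (g n).2.2, ?_⟩
    have himg : (fun i => (g i).1) '' (Set.Iio n) ⊆ up 𝒞 A (g n).1 := by
      rintro E ⟨i, hi, rfl⟩
      exact ⟨hgTp i, hgssub i n hi⟩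
    have hinj : Set.InjOn (fun i => (g i).1) (Set.Iio n) := by
      intro i hi j hj hij
      by_contra hne'
      rcases Nat.lt_or_ge i j with hlt | hge
      · exact (hgssub i j hlt).2 (le_of_eq hij)
      · exact (hgssub j i (lt_of_le_of_ne hge (Ne.symm hne'))).2 (le_of_eq hij.symm)
    have hcount : ((fun i => (g i).1) '' (Set.Iio n)).ncard = n := by
      rw [Set.ncard_image_of_injOn hinj]
      rw [show (Set.Iio n : Set ℕ) = ↑(Finset.range n) by ext m; simp]
      rw [Set.ncard_coe_finset, Finset.card_range]
    calc n = ((fun i => (g i).1) '' (Set.Iio n)).ncard := hcount.symm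
      _ ≤ lev 𝒞 A (g n).1 := Set.ncard_le_ncard himg (up_finite h (hgTp n))
  -- pick a level with uncountably many nodes
  obtain ⟨n, hDn⟩ : ∃ n : ℕ, ¬{D | D ∈ Tp 𝒞 A ∧ lev 𝒞 A D = n}.Countable := by
    by_contra hall
    push_neg at hall
    apply hTc
    have hsub : Tp 𝒞 A ⊆ ⋃ n : ℕ, {D | D ∈ Tp 𝒞 A ∧ lev 𝒞 A D = n} := by
      intro D hD
      exact Set.mem_iUnion.mpr ⟨lev 𝒞 A D, hD, rfl⟩
    exact Set.Countable.mono hsub (Set.countable_iUnion hall)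
  set Dn : Set (Set Ordinal.{0}) := {D | D ∈ Tp 𝒞 A ∧ lev 𝒞 A D = n} with hDndef
  set ℱ : Set (Set Ordinal.{0}) := (fun D => A ∩ D) '' Dn with hF
  set Pc : Set Ordinal.{0} := Set.Iio omega1 \ A with hPc
  set 𝒜 : Set (Set Ordinal.{0}) := ℱ ∪ {Y | Y = Pc ∧ ¬Pc.Countable} with h𝒜
  have hinjF : Set.InjOn (fun D => A ∩ D) Dn := by
    intro D hD D' hD' he
    by_contra hne
    have hcd : (D ∩ D').Countable := same_lev_ad h hD.1 hD'.1 hne (by rw [hD.2, hD'.2])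
    apply hD.1.2
    refine Set.Countable.mono ?_ hcd
    have he' : A ∩ D = A ∩ D' := he
    intro z hz
    have hz' : z ∈ A ∩ D' := by rw [← he']; exact hz
    exact ⟨hz.2, hz'.2⟩
  have hFunc : ¬ℱ.Countable := by
    intro hc
    apply hDn
    rw [← Cardinal.le_aleph0_iff_set_countable] at hc ⊢
    rwa [← Cardinal.mk_image_eq_of_injOn _ _ hinjF]
  have hmem𝒜 : ∀ X ∈ 𝒜, X ⊆ Set.Iio omega1 ∧ ¬X.Countable := by
    rintro X (⟨D, hD, rfl⟩ | ⟨rfl, hPcu⟩)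
    · exact ⟨(Set.inter_subset_left).trans hA, hD.1.2⟩
    · exact ⟨Set.diff_subset, hPcu⟩
  have had : ∀ X ∈ 𝒜, ∀ Y ∈ 𝒜, X ≠ Y → (X ∩ Y).Countable := by
    rintro X (⟨D, hD, rfl⟩ | ⟨rfl, hPcu⟩) Y (⟨D', hD', rfl⟩ | ⟨rfl, hPcu'⟩) hne
    · have hDne : D ≠ D' := fun hc => hne (by rw [hc])
      refine Set.Countable.mono ?_ (same_lev_ad h hD.1 hD'.1 hDne (by rw [hD.2, hD'.2]))
      intro z hz
      exact ⟨hz.1.2, hz.2.2⟩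
    · refine Set.Countable.mono ?_ Set.countable_empty
      rintro z ⟨⟨hz1, _⟩, ⟨_, hz2⟩⟩
      exact absurd hz1 hz2
    · refine Set.Countable.mono ?_ Set.countable_empty
      rintro z ⟨⟨_, hz2⟩, ⟨hz1, _⟩⟩
      exact absurd hz1 hz2
    · exact absurd rfl hne
  have hcatch : ∀ Z : Set Ordinal.{0}, Z ⊆ Set.Iio omega1 → ¬Z.Countable →
      ∃ Y ∈ 𝒜, ¬(Z ∩ Y).Countable := by
    intro Z hZ hZunc
    by_cases hZA : (Z ∩ A).Countable
    · have hZdiff : ¬(Z \ A).Countable := by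
        intro hc
        apply hZunc
        have := hZA.union hc
        rwa [Set.inter_union_diff] at this
      have hPcu : ¬Pc.Countable := by
        intro hc
        apply hZdiff
        refine Set.Countable.mono ?_ hc
        intro z hz
        exact ⟨hZ hz.1, hz.2⟩
      refine ⟨Pc, Or.inr ⟨rfl, hPcu⟩, ?_⟩
      intro hc
      apply hZdiff
      refine Set.Countable.mono ?_ hc
      intro z hz
      exact ⟨hz.1, hZ hz.1, hz.2⟩
    · obtain ⟨E, hE, hVE, hnlev⟩ := chain (Z ∩ A) Set.inter_subset_right hZA n
      obtain ⟨G, hG, hEG, hlevG⟩ := exists_level h (lev 𝒞 A E) E hE rfl n hnlev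
      refine ⟨A ∩ G, Or.inl ⟨G, ⟨hG, hlevG⟩, rfl⟩, ?_⟩
      intro hc
      apply hVE
      refine Set.Countable.mono ?_ hc
      rintro z ⟨⟨hz1, hz2⟩, hz3⟩
      exact ⟨hz1, hz2, hEG hz3⟩
  have h𝒜unc : ¬𝒜.Countable := fun hc => hFunc (hc.mono Set.subset_union_left)
  have hwit : Cardinal.mk ↥𝒜 ∈ {c : Cardinal.{1} | ∃ 𝒜' : Set (Set Ordinal.{0}),
      ¬𝒜'.Countable ∧
      (∀ X ∈ 𝒜', X ⊆ Set.Iio omega1 ∧ ¬X.Countable) ∧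
      (∀ X ∈ 𝒜', ∀ Y ∈ 𝒜', X ≠ Y → (X ∩ Y).Countable) ∧
      (∀ Z : Set Ordinal.{0}, Z ⊆ Set.Iio omega1 → ¬Z.Countable →
        ∃ Y ∈ 𝒜', ¬(Z ∩ Y).Countable) ∧
      Cardinal.mk ↥𝒜' = c} := ⟨𝒜, h𝒜unc, hmem𝒜, had, hcatch, rfl⟩
  have hle : aOmega1 ≤ Cardinal.mk ↥𝒜 := csInf_le (OrderBot.bddBelow _) hwit
  -- aOmega1 is uncountable
  have haleph0 : Cardinal.aleph0 < aOmega1 := by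
    have hne : {c : Cardinal.{1} | ∃ 𝒜' : Set (Set Ordinal.{0}),
        ¬𝒜'.Countable ∧
        (∀ X ∈ 𝒜', X ⊆ Set.Iio omega1 ∧ ¬X.Countable) ∧
        (∀ X ∈ 𝒜', ∀ Y ∈ 𝒜', X ≠ Y → (X ∩ Y).Countable) ∧
        (∀ Z : Set Ordinal.{0}, Z ⊆ Set.Iio omega1 → ¬Z.Countable →
          ∃ Y ∈ 𝒜', ¬(Z ∩ Y).Countable) ∧
        Cardinal.mk ↥𝒜' = c}.Nonempty := ⟨_, hwit⟩
    obtain ⟨𝒜₀, h𝒜₀unc, -, -, -, h𝒜₀mk⟩ : aOmega1 ∈ _ := csInf_mem hne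
    rw [← h𝒜₀mk]
    rw [← not_le, Cardinal.le_aleph0_iff_set_countable]
    exact h𝒜₀unc
  -- size bound
  have hbound : Cardinal.mk ↥𝒜 ≤ Cardinal.mk ↥𝒞 * Cardinal.aleph0 + 1 := by
    have h1 : Cardinal.mk ↥𝒜 ≤ Cardinal.mk ↥ℱ + Cardinal.mk ↥{Y | Y = Pc ∧ ¬Pc.Countable} :=
      Cardinal.mk_union_le _ _
    have h2 : Cardinal.mk ↥{Y | Y = Pc ∧ ¬Pc.Countable} ≤ 1 := by
      rw [Cardinal.mk_le_one_iff_set_subsingleton]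
      intro a ha b hb
      rw [ha.1, hb.1]
    have h3 : Cardinal.mk ↥ℱ ≤ Cardinal.mk ↥(DCE.Tset 𝒞) := by
      rw [Cardinal.mk_image_eq_of_injOn _ _ hinjF]
      exact Cardinal.mk_le_mk_of_subset (fun D hD => hD.1.1)
    calc Cardinal.mk ↥𝒜 ≤ Cardinal.mk ↥ℱ + Cardinal.mk ↥{Y | Y = Pc ∧ ¬Pc.Countable} := h1
      _ ≤ Cardinal.mk ↥(DCE.Tset 𝒞) + 1 := add_le_add h3 h2
      _ ≤ Cardinal.mk ↥𝒞 * Cardinal.aleph0 + 1 := add_le_add_left mk_Tset_le 1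
  exact absurd (lt_of_le_of_lt hle (lt_of_le_of_lt hbound (card_arith hsize haleph0)))
    (lt_irrefl _)

end

end L30

/-- Lemma 30: assume `φ₁(𝒞,𝒯)` and `|𝒞| < 𝔞_{ω₁}`. Then for every uncountable `A ⊆ ω₁`
there is an uncountable `B ⊆ A` such that for every `X ∈ 𝒯`, either `B ⊊ X` or
`B ∩ X` is countable. -/
theorem dce_refine_wrt_tree (𝒞 : Set DCE) (h : DCE.phi1 𝒞)
    (hsize : Cardinal.mk ↥𝒞 < aOmega1)
    (A : Set Ordinal) (hA : A ⊆ Set.Iio omega1) (hAunc : ¬A.Countable) :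
    ∃ B ⊆ A, ¬B.Countable ∧
      ∀ X ∈ DCE.Tset 𝒞, B ⊂ X ∨ (B ∩ X).Countable := by
  obtain ⟨C, hC, hACunc, B, hBsub, hBunc, hBD⟩ := L30.key h hsize hA hAunc
  have hBne : B.Nonempty :=
    Set.nonempty_iff_ne_empty.mpr (fun he => hBunc (he ▸ Set.countable_empty))
  obtain ⟨b₀, hb₀⟩ := hBne
  refine ⟨B \ {b₀}, ?_, ?_, ?_⟩
  · intro x hx
    exact (hBsub hx.1).1
  · intro hc
    apply hBunc
    refine Set.Countable.mono ?_ (hc.insert b₀)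
    intro x hx
    by_cases hxb : x = b₀
    · exact Or.inl hxb
    · exact Or.inr ⟨hx, hxb⟩
  · intro X hX
    by_cases hCX : C ⊆ X
    · left
      apply HasSubset.Subset.ssubset_of_ne
      · intro x hx
        exact hCX (hBsub hx.1).2
      · intro he
        have hb₀X : b₀ ∈ X := hCX (hBsub hb₀).2
        rw [← he] at hb₀X
        exact hb₀X.2 rfl
    · right
      by_cases hXC : X ⊆ C
      · have hne : X ≠ C := fun he => hCX (he ▸ subset_rfl)
        refine Set.Countable.mono ?_ (hBD X hX hXC hne)
        intro z hz
        exact ⟨hz.1.1, hz.2⟩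
      · refine Set.Countable.mono ?_ (h.2.2.2.2.1 X hX C hC hXC hCX)
        intro z hz
        exact ⟨hz.2, (hBsub hz.1.1).2⟩
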